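/- (R23 Regge symmetry / Weyl group symmetry.) For integers m, n, k, i, j with the nine quantities n−k, m−k, k, i, j, m+n−i−j−k, m−i, n−j, i+j−k all nonnegative, one has M(m+n−k; i, j, m+n−i−j−k) · c_{m,n,k}(m−i, n−j) = (-1)^k · M(m+n−k; m−i, n−j, i+j−k) · c_{m,n,k}(i, j), where M(a+b+c; a, b, c) = (a+b+c)!/(a!·b!·c!) denotes the multinomial coefficient. -/

import Mathlib

/-- Binomial coefficient for integer arguments: `C a b = a.choose b` when
`0 ≤ b ≤ a`, and `0` otherwise. -/
def C (a b : ℤ) : ℤ := if 0 ≤ b ∧ b ≤ a then (a.toNat.choose b.toNat : ℤ) else 0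

lemma C_of_neg_right {a b : ℤ} (h : b < 0) : C a b = 0 := by
  simp [C]; intro h'; omega

lemma C_of_lt {a b : ℤ} (h : a < b) : C a b = 0 := by
  simp [C]; intro h'; omega

lemma C_nat (a b : ℕ) : C (a:ℤ) (b:ℤ) = (a.choose b : ℤ) := by
  by_cases h : b ≤ a
  · rw [C, if_pos ⟨Int.natCast_nonneg b, by exact_mod_cast h⟩]
    simp
  · rw [C_of_lt (by exact_mod_cast (by omega : (a:ℤ) < b)), Nat.choose_eq_zero_of_lt (by omega)]
    simp

lemma C_zero_right {a : ℤ} (h : 0 ≤ a) : C a 0 = 1 := by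
  rw [C, if_pos ⟨le_refl 0, h⟩]; simp

lemma C_zero_left (b : ℤ) : C 0 b = if b = 0 then 1 else 0 := by
  by_cases h : b = 0
  · subst h; rw [C_zero_right le_rfl]; simp
  · rcases lt_or_gt_of_ne h with h' | h'
    · rw [C_of_neg_right h']; simp [h]
    · rw [C_of_lt h']; simp [h]

lemma C_pascal {a : ℤ} (ha : 1 ≤ a) (b : ℤ) : C a b = C (a-1) (b-1) + C (a-1) b := by
  rcases lt_trichotomy b 0 with hb | hb | hb
  · rw [C_of_neg_right hb, C_of_neg_right (by omega), C_of_neg_right hb]; ring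
  · subst hb
    rw [C_zero_right (by omega), C_of_neg_right (by omega), C_zero_right (by omega)]; ring
  · -- b ≥ 1
    by_cases hba : b ≤ a
    · obtain ⟨A, hA⟩ := Int.eq_ofNat_of_zero_le (show (0:ℤ) ≤ a - 1 by omega)
      obtain ⟨B, hB⟩ := Int.eq_ofNat_of_zero_le (show (0:ℤ) ≤ b - 1 by omega)
      have ha' : a = ((A+1 : ℕ) : ℤ) := by push_cast; omega
      have hb' : b = ((B+1 : ℕ) : ℤ) := by push_cast; omega
      rw [ha', hb', show ((A+1:ℕ):ℤ) - 1 = (A:ℤ) by push_cast; ring,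
        show ((B+1:ℕ):ℤ) - 1 = (B:ℤ) by push_cast; ring, C_nat, C_nat, C_nat,
        Nat.choose_succ_succ]
      push_cast; ring
    · rw [C_of_lt (by omega), C_of_lt (by omega), C_of_lt (by omega)]; ring

lemma C_mul_C (a s r : ℤ) : C a s * C (a - s) r = C a (s + r) * C (s + r) r := by
  by_cases hs : 0 ≤ s
  · by_cases hr : 0 ≤ r
    · by_cases ha : s + r ≤ a
      · obtain ⟨S, rfl⟩ := Int.eq_ofNat_of_zero_le hs
        obtain ⟨R, rfl⟩ := Int.eq_ofNat_of_zero_le hr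
        obtain ⟨A, rfl⟩ := Int.eq_ofNat_of_zero_le (show (0:ℤ) ≤ a by omega)
        rw [show ((A:ℤ) - S) = ((A - S : ℕ) : ℤ) by omega,
          show ((S:ℤ) + R) = ((S + R : ℕ) : ℤ) by push_cast; ring,
          C_nat, C_nat, C_nat, C_nat]
        have h1 : S + R ≤ A := by exact_mod_cast ha
        have := Nat.choose_mul (n := A) (k := S + R) (s := S) (by omega)
        rw [show (S+R) - S = R by omega] at this
        have h2 : (S+R).choose S = (S+R).choose R := by
          rw [← Nat.choose_symm (show R ≤ S + R by omega)]; congr 1; omega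
        rw [h2] at this
        exact_mod_cast this.symm
      · rw [C_of_lt (show a < s + r by omega)]
        rcases le_or_gt s a with h | h
        · rw [C_of_lt (show a - s < r by omega)]; ring
        · rw [C_of_lt h]; ring
    · rw [C_of_neg_right (by omega : r < 0), C_of_neg_right (by omega : r < 0)]; ring
  · rw [C_of_neg_right (by omega : s < 0), C_of_lt (show s + r < r by omega)]; ring

lemma C_vandermonde {x y : ℤ} (hx : 0 ≤ x) (hy : 0 ≤ y) {l N : ℕ} (hlN : l < N) :
    C (x + y) (l:ℤ) = ∑ v ∈ Finset.range N, C x (v:ℤ) * C y ((l:ℤ) - v) := by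
  obtain ⟨X, rfl⟩ := Int.eq_ofNat_of_zero_le hx
  obtain ⟨Y, rfl⟩ := Int.eq_ofNat_of_zero_le hy
  have hsub : Finset.range (l+1) ⊆ Finset.range N := Finset.range_subset_range.mpr (by omega)
  rw [← Finset.sum_subset hsub (by
    intro v _ hv
    have : l < v := by simpa using hv
    rw [C_of_neg_right (show (l:ℤ) - v < 0 by omega)]; ring)]
  rw [show ((X:ℤ) + Y) = ((X + Y : ℕ) : ℤ) by push_cast; ring, C_nat,
    Nat.add_choose_eq, Finset.Nat.sum_antidiagonal_eq_sum_range_succ_mk]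
  push_cast
  apply Finset.sum_congr rfl
  intro v hv
  have hvl : v ≤ l := Nat.lt_succ_iff.mp (Finset.mem_range.mp hv)
  rw [C_nat, show ((l:ℤ) - v) = ((l - v : ℕ) : ℤ) by omega, C_nat]

lemma Csum (N : ℕ) (m k : ℤ) :
    ∀ (b v : ℕ), k < (N:ℤ) → (b:ℤ) + v ≤ m →
    ∑ l ∈ Finset.range N, (-1:ℤ)^l * C (m - l) (k - l) * C (b:ℤ) ((l:ℤ) - v)
      = (-1)^v * C (m - b - v) (k - v) := by
  intro b
  induction b with
  | zero =>
    intro v hkN hv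
    by_cases hvN : v < N
    · rw [Finset.sum_eq_single v]
      · push_cast
        rw [sub_self, C_zero_left, if_pos rfl]
        norm_num
      · intro l _ hlv
        rw [show ((0:ℕ):ℤ) = (0:ℤ) by norm_num, C_zero_left,
          if_neg (by intro h; exact hlv (by exact_mod_cast (by omega : (l:ℤ) = v))), ]
        ring
      · intro h; exact absurd (Finset.mem_range.mpr hvN) h
    · rw [C_of_neg_right (show k - (v:ℤ) < 0 by omega), Finset.sum_eq_zero]
      · ring
      · intro l hl
        have : l < N := Finset.mem_range.mp hl
        rw [show ((0:ℕ):ℤ) = (0:ℤ) by norm_num, C_zero_left, if_neg (by omega)]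
        ring
  | succ b ih =>
    intro v hkN hv
    have h1 := ih v hkN (by push_cast at hv ⊢; omega)
    have h2 := ih (v+1) hkN (by push_cast at hv ⊢; omega)
    push_cast at h2
    have hsplit : ∑ l ∈ Finset.range N, (-1:ℤ)^l * C (m - l) (k - l) * C ((b+1:ℕ):ℤ) ((l:ℤ) - v)
        = (∑ l ∈ Finset.range N, (-1:ℤ)^l * C (m - l) (k - l) * C (b:ℤ) ((l:ℤ) - (v + 1)))
          + ∑ l ∈ Finset.range N, (-1:ℤ)^l * C (m - l) (k - l) * C (b:ℤ) ((l:ℤ) - v) := by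
      rw [← Finset.sum_add_distrib]
      apply Finset.sum_congr rfl
      intro l _
      rw [C_pascal (show (1:ℤ) ≤ ((b+1:ℕ):ℤ) by push_cast; omega) ((l:ℤ) - v),
        show ((b+1:ℕ):ℤ) - 1 = (b:ℤ) by push_cast; ring,
        show (l:ℤ) - v - 1 = (l:ℤ) - (v+1) by ring]
      ring
    rw [hsplit, h1, h2]
    have hp := C_pascal (a := m - b - v) (by omega) (k - v)
    rw [show m - (b:ℤ) - v - 1 = m - b - (v+1) by ring,
      show k - (v:ℤ) - 1 = k - (v+1) by ring] at hp
    rw [show m - ((b+1:ℕ):ℤ) - v = m - b - (v+1) by push_cast; ring, hp]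
    push_cast
    ring

/-- The coordinate function `c_{m,n,k}(i,j)`. -/
def c (m n k i j : ℤ) : ℤ :=
  ∑ l ∈ Finset.range (k.toNat + 1),
    (-1 : ℤ) ^ l * C (i + j - k) (i - l) * C (m - l) (k - l) * C (n - k + l) l

lemma c_eq_c2 (m n k i j : ℤ) (hk0 : 0 ≤ k)
    (hi0 : 0 ≤ i) (him : i ≤ m) (hj0 : 0 ≤ j) (hjn : j ≤ n) :
    c m n k i j = ∑ v ∈ Finset.range (k.toNat + 1),
      (-1:ℤ)^v * C (i + j - k) (i - v) * C (m - i) (k - v) * C (n - j) (v:ℤ) := by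
  have hK : ((k.toNat : ℤ)) = k := Int.toNat_of_nonneg hk0
  set K := k.toNat with hKdef
  unfold c
  have step1 : ∀ l ∈ Finset.range (K+1),
      (-1:ℤ)^l * C (i + j - k) (i - l) * C (m - l) (k - l) * C (n - k + l) l
      = ∑ v ∈ Finset.range (K+1),
          C (n - j) (v:ℤ) * (C (i + j - k) (i - v) * C (i - v) ((l:ℤ) - v))
            * ((-1:ℤ)^l * C (m - l) (k - l)) := by
    intro l hl
    have hCC : ∀ v : ℕ, C (i + j - k) (i - (v:ℤ)) * C (i - v) ((l:ℤ) - v)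
        = C (i + j - k) (i - l) * C (j - k + l) ((l:ℤ) - v) := by
      intro v
      have h := C_mul_C (i + j - k) (i - l) ((l:ℤ) - v)
      rw [show i + j - k - (i - (l:ℤ)) = j - k + l by ring,
        show i - (l:ℤ) + ((l:ℤ) - v) = i - v by ring] at h
      exact h.symm
    have hsum : ∀ S : Finset ℕ, ∑ v ∈ S,
          C (n - j) (v:ℤ) * (C (i + j - k) (i - v) * C (i - v) ((l:ℤ) - v))
            * ((-1:ℤ)^l * C (m - l) (k - l))
        = ∑ v ∈ S, C (n - j) (v:ℤ) * (C (i + j - k) (i - l) * C (j - k + l) ((l:ℤ) - v))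
            * ((-1:ℤ)^l * C (m - l) (k - l)) := by
      intro S
      exact Finset.sum_congr rfl (fun v _ => by rw [hCC v])
    rw [hsum]
    by_cases hjk : 0 ≤ j - k + l
    · have hv : C (n - k + (l:ℤ)) (l:ℤ)
          = ∑ v ∈ Finset.range (K+1), C (n - j) (v:ℤ) * C (j - k + l) ((l:ℤ) - v) := by
        have h := C_vandermonde (x := n - j) (y := j - k + l) (by omega) hjk
          (N := K+1) (Finset.mem_range.mp hl)
        rw [show n - j + (j - k + (l:ℤ)) = n - k + l by ring] at h
        exact h
      rw [show (-1:ℤ)^l * C (i + j - k) (i - l) * C (m - l) (k - l) * C (n - k + l) l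
          = C (n - k + l) (l:ℤ) * (C (i + j - k) (i - l) * ((-1:ℤ)^l * C (m - l) (k - l))) by ring,
        hv, Finset.sum_mul]
      exact Finset.sum_congr rfl (fun v _ => by ring)
    · rw [C_of_lt (show i + j - k < i - l by omega)]
      rw [Finset.sum_eq_zero (fun v _ => by ring)]
      ring
  rw [Finset.sum_congr rfl step1, Finset.sum_comm]
  apply Finset.sum_congr rfl
  intro v _
  by_cases hiv : 0 ≤ i - v
  · obtain ⟨B, hB⟩ := Int.eq_ofNat_of_zero_le hiv
    have hcs := Csum (K+1) m k B v (by push_cast; omega) (by push_cast; omega)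
    calc ∑ l ∈ Finset.range (K+1),
          C (n - j) (v:ℤ) * (C (i + j - k) (i - v) * C (i - v) ((l:ℤ) - v))
            * ((-1:ℤ)^l * C (m - l) (k - l))
        = C (n - j) (v:ℤ) * C (i + j - k) (i - v) *
            ∑ l ∈ Finset.range (K+1), (-1:ℤ)^l * C (m - l) (k - l) * C (B:ℤ) ((l:ℤ) - v) := by
          rw [Finset.mul_sum]
          exact Finset.sum_congr rfl (fun l _ => by rw [← hB]; ring)
      _ = (-1:ℤ)^v * C (i + j - k) (i - v) * C (m - i) (k - v) * C (n - j) (v:ℤ) := by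
          rw [hcs, show m - (B:ℤ) - v = m - i by omega]
          ring
  · rw [Finset.sum_eq_zero (fun l _ => by
      rw [C_of_neg_right (show i - (v:ℤ) < 0 by omega)]; ring)]
    rw [C_of_neg_right (show i - (v:ℤ) < 0 by omega)]
    ring

/-- The multinomial coefficient `M(a+b+c; a, b, c) = (a+b+c)!/(a! b! c!)`
for integer arguments (interpreted via `toNat`). -/
def M (a b c : ℤ) : ℤ :=
  ((a + b + c).toNat.factorial / (a.toNat.factorial * b.toNat.factorial * c.toNat.factorial) : ℕ)

lemma fac3_dvd (x y z : ℕ) : x.factorial * y.factorial * z.factorial ∣ (x + y + z).factorial :=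
  dvd_trans (Nat.mul_dvd_mul (Nat.factorial_mul_factorial_dvd_factorial_add x y) dvd_rfl)
    (Nat.factorial_mul_factorial_dvd_factorial_add (x+y) z)

lemma add_choose_left (a b : ℕ) :
    (a+b).choose a * a.factorial * b.factorial = (a+b).factorial := by
  have h := Nat.choose_symm (show b ≤ a + b by omega)
  rw [show a + b - b = a from by omega] at h
  rw [h]
  exact Nat.add_choose_mul_factorial_mul_factorial a b

lemma key_nat (a b cc d e f : ℕ) :
    ((a+b) + (cc+d) + (e+f)).factorial / ((a+b).factorial * (cc+d).factorial * (e+f).factorial)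
      * ((a+b).choose a * (cc+d).choose cc * (e+f).choose e)
      * (a.factorial * b.factorial * (cc.factorial * d.factorial) * (e.factorial * f.factorial))
    = ((a+b) + (cc+d) + (e+f)).factorial := by
  have h1 := add_choose_left a b
  have h2 := add_choose_left cc d
  have h3 := add_choose_left e f
  calc ((a+b) + (cc+d) + (e+f)).factorial / ((a+b).factorial * (cc+d).factorial * (e+f).factorial)
      * ((a+b).choose a * (cc+d).choose cc * (e+f).choose e)
      * (a.factorial * b.factorial * (cc.factorial * d.factorial) * (e.factorial * f.factorial))
      = ((a+b) + (cc+d) + (e+f)).factorial / ((a+b).factorial * (cc+d).factorial * (e+f).factorial)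
        * (((a+b).choose a * a.factorial * b.factorial) * ((cc+d).choose cc * cc.factorial * d.factorial)
          * ((e+f).choose e * e.factorial * f.factorial)) := by ring
    _ = ((a+b) + (cc+d) + (e+f)).factorial / ((a+b).factorial * (cc+d).factorial * (e+f).factorial)
        * ((a+b).factorial * (cc+d).factorial * (e+f).factorial) := by rw [h1, h2, h3]
    _ = ((a+b) + (cc+d) + (e+f)).factorial := Nat.div_mul_cancel (fac3_dvd _ _ _)

lemma term_nat (U W v Z P Q : ℕ) :
    ((U+W) + (v+Z) + (P+Q)).factorial / ((U+W).factorial * (v+Z).factorial * (P+Q).factorial)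
      * ((P+Q).choose P * (U+W).choose U * (v+Z).choose v)
    = ((v+P) + (U+Q) + (W+Z)).factorial / ((v+P).factorial * (U+Q).factorial * (W+Z).factorial)
      * ((W+Z).choose W * (v+P).choose v * (U+Q).choose U) := by
  have e1 := key_nat U W v Z P Q
  have e2 := key_nat v P U Q W Z
  rw [show (v+P) + (U+Q) + (W+Z) = (U+W) + (v+Z) + (P+Q) from by ring] at e2 ⊢
  apply Nat.eq_of_mul_eq_mul_right
    (show 0 < U.factorial * W.factorial * (v.factorial * Z.factorial) * (P.factorial * Q.factorial) from by positivity)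
  calc ((U+W) + (v+Z) + (P+Q)).factorial / ((U+W).factorial * (v+Z).factorial * (P+Q).factorial)
      * ((P+Q).choose P * (U+W).choose U * (v+Z).choose v)
      * (U.factorial * W.factorial * (v.factorial * Z.factorial) * (P.factorial * Q.factorial))
      = ((U+W) + (v+Z) + (P+Q)).factorial / ((U+W).factorial * (v+Z).factorial * (P+Q).factorial)
        * ((U+W).choose U * (v+Z).choose v * (P+Q).choose P)
        * (U.factorial * W.factorial * (v.factorial * Z.factorial) * (P.factorial * Q.factorial)) := by ring
    _ = ((U+W) + (v+Z) + (P+Q)).factorial := e1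
    _ = ((U+W) + (v+Z) + (P+Q)).factorial / ((v+P).factorial * (U+Q).factorial * (W+Z).factorial)
        * ((v+P).choose v * (U+Q).choose U * (W+Z).choose W)
        * (v.factorial * P.factorial * (U.factorial * Q.factorial) * (W.factorial * Z.factorial)) := e2.symm
    _ = ((U+W) + (v+Z) + (P+Q)).factorial / ((v+P).factorial * (U+Q).factorial * (W+Z).factorial)
      * ((W+Z).choose W * (v+P).choose v * (U+Q).choose U)
      * (U.factorial * W.factorial * (v.factorial * Z.factorial) * (P.factorial * Q.factorial)) := by ring

lemma term_eq (m n k i j : ℤ) (v : ℕ) (hvk : (v:ℤ) ≤ k)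
    (h3 : 0 ≤ k) (h4 : 0 ≤ i) (h5 : 0 ≤ j)
    (h6 : 0 ≤ m + n - i - j - k) (h7 : 0 ≤ m - i) (h8 : 0 ≤ n - j) (h9 : 0 ≤ i + j - k) :
    M i j (m + n - i - j - k) * (C (m + n - i - j - k) (m - i - v) * C i (k - v) * C j (v:ℤ))
    = M (m - i) (n - j) (i + j - k) *
        (C (i + j - k) (i - k + v) * C (m - i) (v:ℤ) * C (n - j) (k - v)) := by
  by_cases hp : 0 ≤ m - i - v
  · by_cases hq : 0 ≤ n - j - k + v
    · by_cases hw : 0 ≤ i - k + v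
      · by_cases hz : 0 ≤ j - v
        · obtain ⟨P, hP⟩ := Int.eq_ofNat_of_zero_le hp
          obtain ⟨Q, hQ⟩ := Int.eq_ofNat_of_zero_le hq
          obtain ⟨W, hW⟩ := Int.eq_ofNat_of_zero_le hw
          obtain ⟨Z, hZ⟩ := Int.eq_ofNat_of_zero_le hz
          obtain ⟨U, hU⟩ := Int.eq_ofNat_of_zero_le (show (0:ℤ) ≤ k - v by omega)
          have c1 : C (m + n - i - j - k) (m - i - v) = ((P+Q).choose P : ℤ) := by
            rw [show m + n - i - j - k = ((P + Q : ℕ) : ℤ) from by push_cast; omega, hP, C_nat]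
          have c2 : C i (k - v) = ((U+W).choose U : ℤ) := by
            rw [show i = ((U + W : ℕ) : ℤ) from by push_cast; omega, hU, C_nat]
          have c3 : C j (v:ℤ) = ((v+Z).choose v : ℤ) := by
            rw [show j = ((v + Z : ℕ) : ℤ) from by push_cast; omega, C_nat]
          have c4 : C (i + j - k) (i - k + v) = ((W+Z).choose W : ℤ) := by
            rw [show i + j - k = ((W + Z : ℕ) : ℤ) from by push_cast; omega, hW, C_nat]
          have c5 : C (m - i) (v:ℤ) = ((v+P).choose v : ℤ) := by
            rw [show m - i = ((v + P : ℕ) : ℤ) from by push_cast; omega, C_nat]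
          have c6 : C (n - j) (k - v) = ((U+Q).choose U : ℤ) := by
            rw [show n - j = ((U + Q : ℕ) : ℤ) from by push_cast; omega, hU, C_nat]
          have m1 : M i j (m + n - i - j - k)
              = ((((U+W) + (v+Z) + (P+Q)).factorial /
                  ((U+W).factorial * (v+Z).factorial * (P+Q).factorial) : ℕ) : ℤ) := by
            unfold M
            rw [show (i + j + (m + n - i - j - k)).toNat = (U+W) + (v+Z) + (P+Q) from by omega,
              show i.toNat = U + W from by omega, show j.toNat = v + Z from by omega,
              show (m + n - i - j - k).toNat = P + Q from by omega]
          have m2 : M (m - i) (n - j) (i + j - k)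
              = ((((v+P) + (U+Q) + (W+Z)).factorial /
                  ((v+P).factorial * (U+Q).factorial * (W+Z).factorial) : ℕ) : ℤ) := by
            unfold M
            rw [show (m - i + (n - j) + (i + j - k)).toNat = (v+P) + (U+Q) + (W+Z) from by omega,
              show (m - i).toNat = v + P from by omega, show (n - j).toNat = U + Q from by omega,
              show (i + j - k).toNat = W + Z from by omega]
          rw [c1, c2, c3, c4, c5, c6, m1, m2]
          exact_mod_cast congrArg (Nat.cast : ℕ → ℤ) (term_nat U W v Z P Q)
        · rw [C_of_lt (show j < (v:ℤ) by omega),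
            C_of_lt (show i + j - k < i - k + v by omega)]
          ring
      · rw [C_of_lt (show i < k - v by omega),
          C_of_neg_right (show i - k + (v:ℤ) < 0 by omega)]
        ring
    · rw [C_of_lt (show m + n - i - j - k < m - i - v by omega),
        C_of_lt (show n - j < k - v by omega)]
      ring
  · rw [C_of_neg_right (show m - i - (v:ℤ) < 0 by omega),
      C_of_lt (show m - i < (v:ℤ) by omega)]
    ring

theorem regge_R23_symmetry (m n k i j : ℤ)
    (h1 : 0 ≤ n - k) (h2 : 0 ≤ m - k) (h3 : 0 ≤ k) (h4 : 0 ≤ i) (h5 : 0 ≤ j)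
    (h6 : 0 ≤ m + n - i - j - k) (h7 : 0 ≤ m - i) (h8 : 0 ≤ n - j) (h9 : 0 ≤ i + j - k) :
    M i j (m + n - i - j - k) * c m n k (m - i) (n - j) =
    (-1 : ℤ) ^ k.toNat * M (m - i) (n - j) (i + j - k) * c m n k i j := by
  have hK : ((k.toNat : ℤ)) = k := Int.toNat_of_nonneg h3
  have hc1 := c_eq_c2 m n k (m - i) (n - j) h3 h7 (by omega) h8 (by omega)
  rw [show m - i + (n - j) - k = m + n - i - j - k from by ring,
    show m - (m - i) = i from by ring, show n - (n - j) = j from by ring] at hc1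
  have hc2 := c_eq_c2 m n k i j h3 h4 (by omega) h5 (by omega)
  rw [hc1, hc2, Finset.mul_sum]
  rw [show (-1 : ℤ) ^ k.toNat * M (m - i) (n - j) (i + j - k) *
        ∑ v ∈ Finset.range (k.toNat + 1),
          (-1:ℤ)^v * C (i + j - k) (i - v) * C (m - i) (k - v) * C (n - j) (v:ℤ)
      = ∑ v ∈ Finset.range (k.toNat + 1),
          (-1 : ℤ) ^ k.toNat * M (m - i) (n - j) (i + j - k) *
            ((-1:ℤ)^v * C (i + j - k) (i - v) * C (m - i) (k - v) * C (n - j) (v:ℤ))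
    from by rw [Finset.mul_sum]]
  conv_rhs => rw [← Finset.sum_range_reflect]
  apply Finset.sum_congr rfl
  intro v hv
  have hvK : v ≤ k.toNat := Nat.lt_succ_iff.mp (Finset.mem_range.mp hv)
  rw [show k.toNat + 1 - 1 - v = k.toNat - v from by omega]
  rw [show ((k.toNat - v : ℕ) : ℤ) = k - v from by omega]
  rw [show i - (k - (v:ℤ)) = i - k + v from by ring,
    show k - (k - (v:ℤ)) = (v:ℤ) from by ring]
  have hterm := term_eq m n k i j v (by omega) h3 h4 h5 h6 h7 h8 h9
  have hsign : (-1:ℤ) ^ k.toNat * (-1:ℤ) ^ (k.toNat - v) = (-1:ℤ) ^ v := by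
    rw [← pow_add, show k.toNat + (k.toNat - v) = 2 * (k.toNat - v) + v from by omega,
      pow_add, pow_mul]
    norm_num
  linear_combination ((-1:ℤ)^v) * hterm -
    (M (m - i) (n - j) (i + j - k) *
      (C (i + j - k) (i - k + v) * C (m - i) (v:ℤ) * C (n - j) (k - v))) * hsign
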